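/- Let G = ⟨a,b | a^{b²} = a·a^b, [a,a^b] = 1⟩, realized as (ℤ×ℤ) ⋊ ℤ with generator t acting via the matrix with rows (0,1),(1,1). Then G is an R*-group: for any g, x₁, ..., x_r ∈ G, if g^{x₁}·g^{x₂}···g^{x_r} = 1 then g = 1. -/

import Mathlib

/-- The automorphism of `ℤ × ℤ` given by the matrix with rows `(0,1),(1,1)`. -/
def fibAut : AddAut (ℤ × ℤ) where
  toFun p := (p.2, p.1 + p.2)
  invFun p := (p.2 - p.1, p.1)
  left_inv p := by simp
  right_inv p := by simp
  map_add' p q := by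
    simp only [Prod.snd_add, Prod.fst_add, Prod.mk_add_mk, Prod.mk.injEq]
    constructor <;> first | ring1 | omega | (simp; omega) | rfl | trivial

/-- The action of `ℤ` on `ℤ × ℤ` via `fibAut`. -/
def fibAction : Multiplicative ℤ →* MulAut (Multiplicative (ℤ × ℤ)) :=
  zpowersHom (MulAut (Multiplicative (ℤ × ℤ))) (AddEquiv.toMultiplicative fibAut)

/-- The group `⟨a,b | a^{b²} = a·a^b, [a,a^b] = 1⟩`, realized as `(ℤ × ℤ) ⋊ ℤ`. -/
abbrev FibH : Type :=
  SemidirectProduct (Multiplicative (ℤ × ℤ)) (Multiplicative ℤ) fibAction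


noncomputable def goldφ : ℝ := (1 + Real.sqrt 5) / 2

lemma sqrt5_irr : Irrational (Real.sqrt 5) := by
  have := Nat.Prime.irrational_sqrt (p := 5) (by norm_num)
  exact_mod_cast this

lemma sqrt5_sq : Real.sqrt 5 ^ 2 = 5 := Real.sq_sqrt (by norm_num)

lemma goldφ_pos : 0 < goldφ := by
  have := Real.sqrt_nonneg 5
  unfold goldφ; linarith

lemma goldφ_sq : goldφ ^ 2 = goldφ + 1 := by
  unfold goldφ
  nlinarith [sqrt5_sq]

noncomputable def gf (p : ℤ × ℤ) : ℝ := p.1 + goldφ * p.2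

lemma gf_add (p q : ℤ × ℤ) : gf (p + q) = gf p + gf q := by
  simp only [gf, Prod.fst_add, Prod.snd_add]; push_cast; ring

lemma gf_zero : gf 0 = 0 := by simp [gf]

lemma gf_fibAut (p : ℤ × ℤ) : gf (fibAut p) = goldφ * gf p := by
  show gf (p.2, p.1 + p.2) = goldφ * gf p
  simp only [gf]
  push_cast
  linear_combination (-(p.2 : ℝ)) * goldφ_sq

lemma gf_fibAut_inv (p : ℤ × ℤ) : gf (fibAut.symm p) = goldφ⁻¹ * gf p := by
  have h : fibAut (fibAut.symm p) = p := fibAut.apply_symm_apply p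
  have h2 := gf_fibAut (fibAut.symm p)
  rw [h] at h2
  rw [eq_inv_mul_iff_mul_eq₀ goldφ_pos.ne']
  exact h2.symm

abbrev fibB : MulAut (Multiplicative (ℤ × ℤ)) := AddEquiv.toMultiplicative fibAut

lemma gf_B_zpow (k : ℤ) (a : Multiplicative (ℤ × ℤ)) :
    gf ((fibB ^ k) a).toAdd = goldφ ^ k * gf a.toAdd := by
  induction k using Int.induction_on with
  | zero => simp
  | succ n ih =>
      rw [show ((n:ℤ)+1) = 1 + (n:ℤ) by ring, zpow_add, zpow_one, MulAut.mul_apply]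
      have e : gf ((fibB ((fibB ^ (n:ℤ)) a)).toAdd) = goldφ * gf ((fibB ^ (n:ℤ)) a).toAdd :=
        gf_fibAut _
      rw [e, ih, zpow_add₀ goldφ_pos.ne', zpow_one]; ring
  | pred n ih =>
      rw [show (-(n:ℤ) - 1) = -1 + -(n:ℤ) by ring, zpow_add, MulAut.mul_apply, zpow_neg_one]
      have e : gf ((fibB⁻¹ ((fibB ^ (-(n:ℤ))) a)).toAdd)
          = goldφ⁻¹ * gf ((fibB ^ (-(n:ℤ))) a).toAdd := gf_fibAut_inv _
      rw [e, ih, zpow_add₀ goldφ_pos.ne', zpow_neg_one]; ring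

lemma fibAction_apply (m : Multiplicative ℤ) : fibAction m = fibB ^ m.toAdd := rfl

lemma gf_eq_zero {p : ℤ × ℤ} (h : gf p = 0) : p = 0 := by
  obtain ⟨d, c⟩ := p
  simp only [gf] at h
  by_cases hc : c = 0
  · subst hc
    simp at h
    have : d = 0 := by exact_mod_cast h
    simp [this, Prod.ext_iff]
  · exfalso
    have hφ : goldφ = (1 + Real.sqrt 5) / 2 := rfl
    rw [hφ] at h
    have h5 : Real.sqrt 5 * c = -(2 * d + c) := by nlinarith [h]
    have hcR : (c:ℝ) ≠ 0 := Int.cast_ne_zero.mpr hc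
    apply sqrt5_irr
    refine ⟨(-(2 * d + c) : ℚ) / (c : ℚ), ?_⟩
    have : Real.sqrt 5 = (-(2 * (d:ℝ) + c)) / c := by
      field_simp
      linarith [h5]
    rw [this]; push_cast; ring

lemma gf_key (a : Multiplicative (ℤ × ℤ)) (l : List (Multiplicative ℤ)) :
    gf ((l.map (fun m => fibAction m⁻¹ a)).prod).toAdd =
      (l.map (fun m => goldφ ^ (-(m.toAdd)))).sum * gf a.toAdd := by
  induction l with
  | nil => simp [gf_zero]
  | cons m l ih =>
      rw [List.map_cons, List.prod_cons, List.map_cons, List.sum_cons, toAdd_mul, gf_add, ih]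
      have e : gf ((fibAction m⁻¹) a).toAdd = goldφ ^ (-(m.toAdd)) * gf a.toAdd := by
        rw [fibAction_apply]
        have := gf_B_zpow ((m⁻¹ : Multiplicative ℤ).toAdd) a
        simpa using this
      rw [e]; ring


open SemidirectProduct in
/-- `G = ⟨a,b | a^{b²} = a·a^b, [a,a^b] = 1⟩ ≅ (ℤ×ℤ) ⋊ ℤ` is an `R*`-group:
any product of conjugates of a single element `g` equal to `1` forces `g = 1`. -/
theorem stmt_17 (g : FibH) (L : List FibH) (hL : L ≠ [])
    (h : (L.map (fun x => x⁻¹ * g * x)).prod = 1) : g = 1 := by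
  have hconj_right : ∀ x : FibH, rightHom (x⁻¹ * g * x) = rightHom g := by
    intro x
    rw [map_mul, map_mul, map_inv, mul_comm, ← mul_assoc, mul_inv_cancel, one_mul]
  -- Step 1: right component of g is 1
  have hr : g.right = 1 := by
    have h1 := congrArg rightHom h
    rw [map_one, map_list_prod, List.map_map] at h1
    have h2 : (L.map (⇑rightHom ∘ fun x => x⁻¹ * g * x)) = L.map (fun _ => rightHom g) := by
      apply List.map_congr_left; intro x _; exact hconj_right x
    rw [h2, List.map_const', List.prod_replicate] at h1
    have h3 : (L.length : ℤ) * (rightHom g).toAdd = 0 := by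
      have := congrArg Multiplicative.toAdd h1
      simpa [toAdd_pow] using this
    have hlen : (L.length : ℤ) ≠ 0 := by
      simpa [List.length_eq_zero_iff] using hL
    rcases mul_eq_zero.mp h3 with h4 | h4
    · exact absurd h4 hlen
    · exact h4
  set a : Multiplicative (ℤ × ℤ) := g.left with ha
  have hg : g = inl a := by
    ext
    · rfl
    · rfl
    · simp [hr]
  -- Step 2: each conjugate equals inl (fibAction x.right⁻¹ a)
  have hconj : ∀ x : FibH, x⁻¹ * g * x = inl (fibAction x.right⁻¹ a) := by
    intro x
    have hx := inl_left_mul_inr_right x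
    have hc : ((inl x.left : FibH))⁻¹ * inl a * inl x.left = inl a := by
      rw [← map_inv, ← map_mul, ← map_mul]
      congr 1
      rw [mul_comm, ← mul_assoc, mul_inv_cancel, one_mul]
    calc x⁻¹ * g * x
        = (inr x.right)⁻¹ * ((inl x.left)⁻¹ * inl a * inl x.left) * inr x.right := by
          rw [hg]
          conv_lhs => rw [← hx, mul_inv_rev]
          group
      _ = (inr x.right)⁻¹ * inl a * inr x.right := by rw [hc]
      _ = inl (fibAction x.right⁻¹ a) := by rw [map_inv fibAction, inl_aut_inv, map_inv]
  -- Step 3: pull the product inside inl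
  have h' : ((L.map (fun x => fibAction x.right⁻¹ a)).prod) = 1 := by
    have h1 : (L.map (fun x => inl (fibAction x.right⁻¹ a) : FibH → FibH)).prod = 1 := by
      rw [← h]
      congr 1
      exact (List.map_congr_left (fun x _ => hconj x)).symm
    rw [show (fun x : FibH => (inl (fibAction x.right⁻¹ a) : FibH))
        = ⇑(inl : Multiplicative (ℤ × ℤ) →* FibH) ∘ (fun x => fibAction x.right⁻¹ a) from rfl,
      ← List.map_map, ← map_list_prod] at h1
    refine inl_injective (φ := fibAction) ?_
    rw [map_one]
    exact h1
  -- Step 4: apply gf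
  have h2 := congrArg (fun z : Multiplicative (ℤ × ℤ) => gf z.toAdd) h'
  rw [show (fun x : FibH => fibAction x.right⁻¹ a)
      = (fun m : Multiplicative ℤ => fibAction m⁻¹ a) ∘ (fun x : FibH => x.right) from rfl,
    ← List.map_map, gf_key] at h2
  have hone : gf ((1 : Multiplicative (ℤ × ℤ))).toAdd = 0 := gf_zero
  rw [hone] at h2
  have hpos : 0 < ((L.map (fun x : FibH => x.right)).map
      (fun m : Multiplicative ℤ => goldφ ^ (-(m.toAdd)))).sum := by
    apply List.sum_pos
    · intro x hx
      simp only [List.mem_map] at hx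
      obtain ⟨m, _, rfl⟩ := hx
      exact zpow_pos goldφ_pos _
    · simp only [ne_eq, List.map_eq_nil_iff]
      simpa using hL
  have hgfa : gf a.toAdd = 0 := by
    rcases mul_eq_zero.mp h2 with h4 | h4
    · exact absurd h4 hpos.ne'
    · exact h4
  have : a.toAdd = 0 := gf_eq_zero hgfa
  have ha1 : a = 1 := by
    have := congrArg Multiplicative.ofAdd this
    simpa using this
  rw [hg, ha1, map_one]
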